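/- Let ε, r > 0 with δ := ε/r, e₁ = (1,0,0) ∈ ℝ³, and define (c_n) by c₀ = r+ε, c_{n+1} = r+ε − r²/(r+ε+c_n); let ρ₀ := 1, ρ_m := r/(c₀+c_{m−1}) for m ≥ 1, q_n := ∏_{m=0}^n ρ_m, Q := Σ_{n=0}^∞ q_n, and h₀(x) := −(1/(4πQ))·Σ_{n=0}^∞ q_n·(1/|x − c_n e₁| − 1/|x + c_n e₁|). Then for every x outside the closed balls B̄₁ ∪ B̄₂ (balls of radius r centered at ±(r+ε)e₁), the pointwise bound |∇h₀(x)| ≤ (1/(2πQ))·Σ_{n=0}^∞ q_n/(c_n − ε)² holds; moreover there exist C > 0 and δ₀ ∈ (0,1) such that for all δ ∈ (0,δ₀), sup_{x ∉ B̄₁∪B̄₂} |∇h₀(x)| ≤ C/(Q·r·ε). -/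

import Mathlib

open Real
set_option maxHeartbeats 1600000
noncomputable def auxPhi (w : EuclideanSpace ℝ (Fin 3)) : EuclideanSpace ℝ (Fin 3) →L[ℝ] ℝ :=
  (-(‖w‖^3)⁻¹) • innerSL ℝ w

lemma auxPhi_hasFDerivAt (a x : EuclideanSpace ℝ (Fin 3)) (h : x ≠ a) :
    HasFDerivAt (fun y => ‖y - a‖⁻¹) (auxPhi (x - a)) x := by
  have hw : x - a ≠ 0 := sub_ne_zero.2 h
  have hn : (0:ℝ) < ‖x - a‖ := norm_pos_iff.mpr hw
  have h1 : HasFDerivAt (fun y : EuclideanSpace ℝ (Fin 3) => ‖y - a‖^2)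
      (2 • (innerSL ℝ (x - a)).comp (ContinuousLinearMap.id ℝ (EuclideanSpace ℝ (Fin 3)))) x :=
    HasFDerivAt.norm_sq ((hasFDerivAt_id x).sub_const a)
  have ht : (0:ℝ) < ‖x - a‖^2 := by positivity
  have hs : Real.sqrt (‖x - a‖^2) = ‖x - a‖ := Real.sqrt_sq (norm_nonneg _)
  have h2 : HasDerivAt (fun t : ℝ => (Real.sqrt t)⁻¹)
      (-(1 / (2 * Real.sqrt (‖x - a‖^2))) / (Real.sqrt (‖x - a‖^2))^2) (‖x - a‖^2) :=
    (Real.hasDerivAt_sqrt ht.ne').inv (by rw [hs]; exact hn.ne')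
  have h3 := h2.comp_hasFDerivAt x h1
  have hfun : (fun t : ℝ => (Real.sqrt t)⁻¹) ∘ (fun y : EuclideanSpace ℝ (Fin 3) => ‖y - a‖^2)
      = fun y : EuclideanSpace ℝ (Fin 3) => ‖y - a‖⁻¹ := by
    funext y
    simp [Function.comp, Real.sqrt_sq (norm_nonneg _)]
  rw [hfun] at h3
  refine h3.congr_fderiv ?_
  rw [hs]
  ext v
  simp [auxPhi, two_smul, smul_eq_mul]
  field_simp
  ring



lemma auxPhi_norm_le (w : EuclideanSpace ℝ (Fin 3)) : ‖auxPhi w‖ ≤ (‖w‖^2)⁻¹ := by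
  rcases eq_or_ne w 0 with h | h
  · simp [auxPhi, h]
  · have hw : (0:ℝ) < ‖w‖ := norm_pos_iff.mpr h
    have hns := norm_smul (α := ℝ) (-(‖w‖^3)⁻¹) (innerSL ℝ w)
    rw [auxPhi, hns, innerSL_apply_norm, norm_neg, norm_inv,
      norm_of_nonneg (by positivity : (0:ℝ) ≤ ‖w‖^3)]
    rw [le_iff_lt_or_eq]; right; field_simp

noncomputable def auxU (lam mu : ℝ) (n : ℕ) : ℝ := (lam^n - mu^n)/(lam - mu)

lemma main_est (ε r : ℝ) (hε : 0 < ε) (hr : 0 < r) (c ρ q : ℕ → ℝ)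
    (hc0 : c 0 = r + ε) (hcr : ∀ n, c (n+1) = r + ε - r^2/(r+ε+c n))
    (hρ0 : ρ 0 = 1) (hρm : ∀ m, 1 ≤ m → ρ m = r/(c 0 + c (m-1)))
    (hq : ∀ n, q n = ∏ m ∈ Finset.range (n+1), ρ m) :
    (∀ n, 0 < q n) ∧ (∀ n, c n ≤ r + ε) ∧
    (∃ m0 > 0, ∀ n, m0 ≤ c n - ε) ∧
    Summable (fun n => q n / (c n - ε)^2) ∧
    (ε < r → ∑' n, q n / (c n - ε)^2 ≤ 8/(r*ε)) := by
  have hK2 : (Real.sqrt (ε*(2*r+ε)))^2 = ε*(2*r+ε) := Real.sq_sqrt (by positivity)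
  set K := Real.sqrt (ε*(2*r+ε)) with hKdef
  have hK0 : 0 < K := Real.sqrt_pos.mpr (by positivity)
  have hεK : ε < K := by nlinarith
  have hKs : K < r + ε := by nlinarith
  set lam := (r+ε+K)/r with hlamdef
  set mu := (r+ε-K)/r with hmudef
  have hmu0 : 0 < mu := div_pos (by linarith) hr
  have hmu1 : mu < 1 := by rw [hmudef, div_lt_one hr]; linarith
  have hlam1 : 1 < lam := by rw [hlamdef, lt_div_iff₀ hr]; linarith
  have hlm : lam * mu = 1 := by
    rw [hlamdef, hmudef]; field_simp; linear_combination -hK2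
  have hdpos : 0 < lam - mu := by linarith
  set U := auxU lam mu with hUdef
  have hU0 : U 0 = 0 := by simp [hUdef, auxU]
  have hU1 : U 1 = 1 := by simp [hUdef, auxU]; exact hdpos.ne'
  have hUpos : ∀ n, 0 < U (n+1) := by
    intro n
    apply div_pos _ hdpos
    have h1 : mu^(n+1) < 1 := pow_lt_one₀ hmu0.le hmu1 (Nat.succ_ne_zero n)
    have h2 : 1 < lam^(n+1) := one_lt_pow₀ hlam1 (Nat.succ_ne_zero n)
    linarith
  have hUnonneg : ∀ n, 0 ≤ U n := by
    intro n; cases n with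
    | zero => rw [hU0]
    | succ m => exact (hUpos m).le
  have hUmono : ∀ n, lam^n*(lam-1)/(lam-mu) ≤ U (n+1) - U n := by
    intro n
    have hditeq : U (n+1) - U n = (lam^n*(lam-1) + mu^n*(1-mu))/(lam-mu) := by
      simp only [hUdef, auxU]; field_simp; ring
    rw [hditeq, div_le_div_iff_of_pos_right hdpos]
    nlinarith [pow_nonneg hmu0.le n]
  have hUub : ∀ n, U (n+1) ≤ lam^(n+1)/(lam-mu) := by
    intro n
    simp only [hUdef, auxU]
    rw [div_le_div_iff_of_pos_right hdpos]
    nlinarith [pow_nonneg hmu0.le (n+1)]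
  have hApos : ∀ n, (0:ℝ) < lam^n*(lam-1)/(lam-mu) := by
    intro n
    exact div_pos (mul_pos (pow_pos (by linarith) n) (by linarith)) hdpos
  have hUdiffpos : ∀ n, 0 < U (n+1) - U n := fun n => lt_of_lt_of_le (hApos n) (hUmono n)
  have hlmsum : lam + mu = 2*(r+ε)/r := by rw [hlamdef, hmudef]; field_simp; ring
  have hUrec : ∀ n, U (n+2) = (lam+mu) * U (n+1) - U n := by
    intro n
    have h1 : lam^(n+2)-mu^(n+2) = (lam+mu)*(lam^(n+1)-mu^(n+1)) - (lam*mu)*(lam^n - mu^n) := by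
      ring
    rw [hlm, one_mul] at h1
    simp only [hUdef, auxU]
    field_simp
    linear_combination h1
  have hden_of : ∀ n, c n = r+ε - r*(U n / U (n+1)) → r+ε+c n = r * (U (n+2) / U (n+1)) := by
    intro n h
    have h1 : U (n+1) ≠ 0 := (hUpos n).ne'
    rw [h, hUrec n, hlmsum]
    field_simp
    ring
  have hc_closed : ∀ n, c n = r+ε - r*(U n / U (n+1)) := by
    intro n
    induction n with
    | zero => rw [hc0, hU0]; simp
    | succ m ih =>
      rw [hcr m, hden_of m ih]
      have h1 := hUpos m
      have h2 := hUpos (m+1)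
      field_simp
  have hq_closed : ∀ n, q n = 1 / U (n+1) := by
    intro n
    induction n with
    | zero => rw [hq 0, hU1]; simp [hρ0]
    | succ m ih =>
      have hring : q (m+1) = q m * ρ (m+1) := by
        rw [hq (m+1), Finset.prod_range_succ, ← hq m]
      have hrho : ρ (m+1) = r / (r+ε+c m) := by
        rw [hρm (m+1) (Nat.le_add_left 1 m)]
        simp [hc0]
      rw [hring, ih, hrho, hden_of m (hc_closed m)]
      have h1 := hUpos m
      have h2 := hUpos (m+1)
      field_simp
  have hqpos : ∀ n, 0 < q n := by
    intro n; rw [hq_closed n]; exact div_pos one_pos (hUpos n)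
  have hcub : ∀ n, c n ≤ r + ε := by
    intro n; rw [hc_closed n]
    have : 0 ≤ r*(U n / U (n+1)) :=
      mul_nonneg hr.le (div_nonneg (hUnonneg n) (hUpos n).le)
    linarith
  have hca : ∀ n, c n - ε = r * ((U (n+1) - U n)/U (n+1)) := by
    intro n
    rw [hc_closed n]
    have h1 := (hUpos n).ne'
    field_simp
    ring
  clear_value K lam mu U
  set B0 := lam*(lam-mu)/(r^2*(lam-1)^2) with hB0def
  have hterm : ∀ n, q n / (c n - ε)^2 ≤ B0 * mu^n := by
    intro n
    have h1 := hUpos n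
    have h2 := hUdiffpos n
    have hqr : q n/(c n - ε)^2 = U (n+1)/(r^2*(U (n+1) - U n)^2) := by
      rw [hq_closed n, hca n]
      field_simp
    have hstep : U (n+1)/(r^2*(U (n+1) - U n)^2)
        ≤ (lam^(n+1)/(lam-mu))/(r^2*(lam^n*(lam-1)/(lam-mu))^2) := by
      apply div_le_div₀ (by positivity) (hUub n)
      · exact mul_pos (by positivity) (pow_pos (hApos n) 2)
      · have := hUmono n
        have hA := hApos n
        have h3 : (lam^n*(lam-1)/(lam-mu))^2 ≤ (U (n+1) - U n)^2 := by
          apply pow_le_pow_left₀ hA.le this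
        nlinarith [sq_nonneg (U (n+1) - U n)]
    have heq : (lam^(n+1)/(lam-mu))/(r^2*(lam^n*(lam-1)/(lam-mu))^2) = B0 * mu^n := by
      have hln : (0:ℝ) < lam^n := pow_pos (by linarith) n
      have hmun : mu^n = (lam^n)⁻¹ :=
        eq_inv_of_mul_eq_one_left (by rw [← mul_pow, mul_comm mu lam, hlm, one_pow])
      rw [hB0def, hmun]
      have hl1 : lam - 1 ≠ 0 := by linarith
      field_simp
      ring
    rw [hqr]
    calc U (n+1)/(r^2*(U (n+1) - U n)^2)
        ≤ (lam^(n+1)/(lam-mu))/(r^2*(lam^n*(lam-1)/(lam-mu))^2) := hstep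
      _ = B0 * mu^n := heq
  have hB0pos : 0 < B0 := by
    rw [hB0def]
    apply div_pos (mul_pos (by linarith) hdpos)
    have : (0:ℝ) < (lam-1)^2 := pow_pos (by linarith) 2
    positivity
  have hgeom : Summable (fun n => B0 * mu^n) :=
    (summable_geometric_of_lt_one hmu0.le hmu1).mul_left B0
  have htermnn : ∀ n, 0 ≤ q n / (c n - ε)^2 :=
    fun n => div_nonneg (hqpos n).le (sq_nonneg _)
  have hsummable : Summable (fun n => q n / (c n - ε)^2) :=
    Summable.of_nonneg_of_le htermnn hterm hgeom
  refine ⟨hqpos, hcub, ⟨r*(lam-1)/lam, ?_, ?_⟩, hsummable, ?_⟩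
  · exact div_pos (mul_pos hr (by linarith)) (by linarith)
  · intro n
    rw [hca n]
    have h1 : (lam-1)/lam ≤ (U (n+1) - U n)/U (n+1) := by
      have heq : (lam-1)/lam = (lam^n*(lam-1)/(lam-mu))/(lam^(n+1)/(lam-mu)) := by
        have hln : (0:ℝ) < lam^n := pow_pos (by linarith) n
        have hl0 : lam ≠ 0 := by linarith
        field_simp
        ring
      rw [heq]
      exact div_le_div₀ (hUdiffpos n).le (hUmono n) (hUpos n) (hUub n)
    calc r*(lam-1)/lam = r*((lam-1)/lam) := by ring
      _ ≤ r*((U (n+1) - U n)/U (n+1)) := by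
          exact mul_le_mul_of_nonneg_left h1 hr.le
  · intro hεr
    have htsum : ∑' n, q n / (c n - ε)^2 ≤ ∑' n, B0 * mu^n :=
      Summable.tsum_le_tsum hterm hsummable hgeom
    have hgeomsum : ∑' n, B0 * mu^n = B0 * (1-mu)⁻¹ := by
      rw [tsum_mul_left, tsum_geometric_of_lt_one hmu0.le hmu1]
    have hlam4 : lam ≤ 4 := by
      rw [hlamdef, div_le_iff₀ hr]
      nlinarith
    have hKe : 0 < K - ε := by linarith
    have hl1 : lam - 1 = (K+ε)/r := by rw [hlamdef]; field_simp; ring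
    have hl3 : lam - mu = 2*K/r := by rw [hlamdef, hmudef]; field_simp; ring
    have h1mu : 1 - mu = (K-ε)/r := by rw [hmudef]; field_simp; ring
    have s1 : B0 ≤ 8/(r*K) := by
      rw [hB0def, hl3, hl1]
      have hnum : lam*(2*K/r) ≤ 4*(2*K/r) := by
        apply mul_le_mul_of_nonneg_right hlam4 (by positivity)
      have hden : K^2 ≤ r^2*((K+ε)/r)^2 := by
        have : r^2*((K+ε)/r)^2 = (K+ε)^2 := by field_simp
        rw [this]
        nlinarith
      calc lam*(2*K/r)/(r^2*((K+ε)/r)^2) ≤ (4*(2*K/r))/(K^2) :=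
            div_le_div₀ (by positivity) hnum (by positivity) hden
        _ = 8/(r*K) := by field_simp; ring
    have s2 : B0*(1-mu)⁻¹ ≤ 8/(K*(K-ε)) := by
      rw [h1mu, inv_div]
      calc B0*(r/(K-ε)) ≤ (8/(r*K))*(r/(K-ε)) := by
            apply mul_le_mul_of_nonneg_right s1 (by positivity)
        _ = 8/(K*(K-ε)) := by field_simp
    have s3 : r*ε ≤ K*(K-ε) := by nlinarith
    have hfinal : B0 * (1-mu)⁻¹ ≤ 8/(r*ε) := by
      refine s2.trans ?_
      exact div_le_div_of_nonneg_left (by norm_num) (by positivity) s3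
    calc ∑' n, q n / (c n - ε)^2 ≤ ∑' n, B0 * mu^n := htsum
      _ = B0 * (1-mu)⁻¹ := hgeomsum
      _ ≤ 8/(r*ε) := hfinal

theorem stmt_18 :
    ∃ C > (0:ℝ), ∃ δ₀ ∈ Set.Ioo (0:ℝ) 1,
      ∀ ε r : ℝ, 0 < ε → 0 < r →
      ∀ e₁ : EuclideanSpace ℝ (Fin 3), e₁ = EuclideanSpace.single 0 1 →
      ∀ c ρ q : ℕ → ℝ,
        c 0 = r + ε →
        (∀ n, c (n + 1) = r + ε - r ^ 2 / (r + ε + c n)) →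
        ρ 0 = 1 →
        (∀ m, 1 ≤ m → ρ m = r / (c 0 + c (m - 1))) →
        (∀ n, q n = ∏ m ∈ Finset.range (n + 1), ρ m) →
        Summable q →
      ∀ Q : ℝ, Q = ∑' n, q n →
      ∀ h₀ : EuclideanSpace ℝ (Fin 3) → ℝ,
        (∀ x, h₀ x = -(1 / (4 * Real.pi * Q)) *
          ∑' n, q n * (1 / ‖x - c n • e₁‖ - 1 / ‖x + c n • e₁‖)) →
        (∀ x ∉ closure (Metric.ball ((r + ε) • e₁) r ∪ Metric.ball (-((r + ε) • e₁)) r),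
          ‖fderiv ℝ h₀ x‖ ≤ 1 / (2 * Real.pi * Q) * ∑' n, q n / (c n - ε) ^ 2) ∧
        (ε / r < δ₀ →
          ∀ x ∉ closure (Metric.ball ((r + ε) • e₁) r ∪ Metric.ball (-((r + ε) • e₁)) r),
            ‖fderiv ℝ h₀ x‖ ≤ C / (Q * r * ε)) := by
  refine ⟨2, by norm_num, 1/2, ⟨by norm_num, by norm_num⟩, ?_⟩
  intro ε r hε hr e₁ he₁ c ρ q hc0 hcr hρ0 hρm hq hsq Q hQ h₀ hh₀
  obtain ⟨hqpos, hcub, ⟨m0, hm0pos, hm0⟩, hsummable, hbound⟩ :=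
    main_est ε r hε hr c ρ q hc0 hcr hρ0 hρm hq
  have hπ : 0 < Real.pi := Real.pi_pos
  have hcε : ∀ n, 0 < c n - ε := fun n => lt_of_lt_of_le hm0pos (hm0 n)
  have he1 : ‖e₁‖ = 1 := by rw [he₁, EuclideanSpace.norm_single]; norm_num
  have hq0 : q 0 = 1 := by rw [hq 0]; simp [hρ0]
  have hQ1 : 1 ≤ Q := by
    have := Summable.le_tsum hsq 0 (fun n _ => (hqpos n).le)
    rw [hq0] at this; rw [hQ]; exact this
  have hQpos : 0 < Q := lt_of_lt_of_le one_pos hQ1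
  have grad : ∀ x ∉ closure (Metric.ball ((r + ε) • e₁) r ∪ Metric.ball (-((r + ε) • e₁)) r),
      ‖fderiv ℝ h₀ x‖ ≤ 1 / (2 * Real.pi * Q) * ∑' n, q n / (c n - ε) ^ 2 := by
    intro x hx
    set p : EuclideanSpace ℝ (Fin 3) := (r + ε) • e₁ with hp
    have hcl1 : closure (Metric.ball p r ∪ Metric.ball (-p) r)
        = Metric.closedBall p r ∪ Metric.closedBall (-p) r := by
      rw [closure_union, closure_ball p hr.ne', closure_ball (-p) hr.ne']
    set D : Set (EuclideanSpace ℝ (Fin 3)) :=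
      (Metric.closedBall p r ∪ Metric.closedBall (-p) r)ᶜ with hD
    rw [hcl1] at hx
    have hxD : x ∈ D := hx
    have hDopen : IsOpen D :=
      (IsClosed.union Metric.isClosed_closedBall Metric.isClosed_closedBall).isOpen_compl
    have hdist : ∀ y ∈ D, ∀ n, c n - ε ≤ ‖y - c n • e₁‖ ∧ c n - ε ≤ ‖y + c n • e₁‖ := by
      intro y hy n
      rw [hD, Set.mem_compl_iff, Set.mem_union, not_or, Metric.mem_closedBall,
        Metric.mem_closedBall, dist_eq_norm, dist_eq_norm, not_le, not_le,
        sub_neg_eq_add] at hy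
      obtain ⟨hy1, hy2⟩ := hy
      have hbn : ‖c n • e₁ - p‖ = r + ε - c n := by
        rw [hp, ← sub_smul, norm_smul, he1, mul_one, Real.norm_eq_abs,
          abs_of_nonpos (by linarith [hcub n])]
        ring
      have hbn2 : ‖p - c n • e₁‖ = r + ε - c n := by
        rw [← norm_neg, neg_sub]; exact hbn
      constructor
      · calc c n - ε = r - (r + ε - c n) := by ring
          _ ≤ ‖y - p‖ - ‖c n • e₁ - p‖ := by rw [hbn]; linarith
          _ ≤ ‖(y - p) - (c n • e₁ - p)‖ := norm_sub_norm_le _ _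
          _ = ‖y - c n • e₁‖ := by congr 1; abel
      · calc c n - ε = r - (r + ε - c n) := by ring
          _ ≤ ‖y + p‖ - ‖p - c n • e₁‖ := by rw [hbn2]; linarith
          _ ≤ ‖(y + p) - (p - c n • e₁)‖ := norm_sub_norm_le _ _
          _ = ‖y + c n • e₁‖ := by congr 1; abel
    obtain ⟨R, hR0, hRD⟩ := Metric.isOpen_iff.mp hDopen x hxD
    set f : ℕ → EuclideanSpace ℝ (Fin 3) → ℝ :=
      fun n y => q n * (‖y - c n • e₁‖⁻¹ - ‖y + c n • e₁‖⁻¹) with hf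
    set f' : ℕ → EuclideanSpace ℝ (Fin 3) → (EuclideanSpace ℝ (Fin 3) →L[ℝ] ℝ) :=
      fun n y => q n • (auxPhi (y - c n • e₁) - auxPhi (y + c n • e₁)) with hf'
    have hderiv : ∀ n, ∀ y ∈ D, HasFDerivAt (f n) (f' n y) y := by
      intro n y hy
      obtain ⟨hz1, hz2⟩ := hdist y hy n
      have hne1 : y ≠ c n • e₁ := by
        intro h; rw [h, sub_self, norm_zero] at hz1; linarith [hcε n]
      have hne2 : y ≠ -(c n • e₁) := by
        intro h
        rw [h, neg_add_cancel, norm_zero] at hz2; linarith [hcε n]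
      have d1 := auxPhi_hasFDerivAt (c n • e₁) y hne1
      have d2 := auxPhi_hasFDerivAt (-(c n • e₁)) y hne2
      have hfe : (fun z : EuclideanSpace ℝ (Fin 3) => ‖z - -(c n • e₁)‖⁻¹)
          = fun z => ‖z + c n • e₁‖⁻¹ := by funext z; rw [sub_neg_eq_add]
      rw [hfe, sub_neg_eq_add] at d2
      exact (d1.sub d2).const_mul (q n)
    have hbound' : ∀ n, ∀ y ∈ D, ‖f' n y‖ ≤ 2 * (q n / (c n - ε) ^ 2) := by
      intro n y hy
      obtain ⟨hz1, hz2⟩ := hdist y hy n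
      have hc0' := hcε n
      have k1 : ‖auxPhi (y - c n • e₁)‖ ≤ ((c n - ε) ^ 2)⁻¹ :=
        (auxPhi_norm_le _).trans
          (inv_anti₀ (by positivity) (pow_le_pow_left₀ hc0'.le hz1 2))
      have k2 : ‖auxPhi (y + c n • e₁)‖ ≤ ((c n - ε) ^ 2)⁻¹ :=
        (auxPhi_norm_le _).trans
          (inv_anti₀ (by positivity) (pow_le_pow_left₀ hc0'.le hz2 2))
      calc ‖f' n y‖ = |q n| * ‖auxPhi (y - c n • e₁) - auxPhi (y + c n • e₁)‖ := by
            simp only [hf']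
            rw [norm_smul (α := ℝ) (q n) (auxPhi (y - c n • e₁) - auxPhi (y + c n • e₁)),
              Real.norm_eq_abs]
        _ = q n * ‖auxPhi (y - c n • e₁) - auxPhi (y + c n • e₁)‖ := by
            rw [abs_of_pos (hqpos n)]
        _ ≤ q n * (‖auxPhi (y - c n • e₁)‖ + ‖auxPhi (y + c n • e₁)‖) :=
            mul_le_mul_of_nonneg_left (norm_sub_le _ _) (hqpos n).le
        _ ≤ q n * (((c n - ε) ^ 2)⁻¹ + ((c n - ε) ^ 2)⁻¹) :=
            mul_le_mul_of_nonneg_left (add_le_add k1 k2) (hqpos n).le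
        _ = 2 * (q n / (c n - ε) ^ 2) := by rw [div_eq_mul_inv]; ring
    have hu : Summable (fun n => 2 * (q n / (c n - ε) ^ 2)) := hsummable.mul_left 2
    have hf0 : Summable (fun n => f n x) := by
      apply Summable.of_norm
      apply Summable.of_nonneg_of_le (fun n => norm_nonneg _) _ (hsq.mul_left (2 / m0))
      intro n
      obtain ⟨hz1, hz2⟩ := hdist x hxD n
      have hm0n := hm0 n
      have i1 : ‖x - c n • e₁‖⁻¹ ≤ m0⁻¹ :=
        inv_anti₀ hm0pos (hm0n.trans hz1)
      have i2 : ‖x + c n • e₁‖⁻¹ ≤ m0⁻¹ :=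
        inv_anti₀ hm0pos (hm0n.trans hz2)
      calc ‖f n x‖ = |q n| * ‖‖x - c n • e₁‖⁻¹ - ‖x + c n • e₁‖⁻¹‖ := by
            simp only [hf]
            rw [norm_mul, Real.norm_eq_abs]
        _ = q n * ‖‖x - c n • e₁‖⁻¹ - ‖x + c n • e₁‖⁻¹‖ := by rw [abs_of_pos (hqpos n)]
        _ ≤ q n * (‖‖x - c n • e₁‖⁻¹‖ + ‖‖x + c n • e₁‖⁻¹‖) :=
            mul_le_mul_of_nonneg_left (norm_sub_le _ _) (hqpos n).le
        _ ≤ q n * (m0⁻¹ + m0⁻¹) := by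
            apply mul_le_mul_of_nonneg_left _ (hqpos n).le
            apply add_le_add
            · rw [Real.norm_eq_abs, abs_of_nonneg (by positivity)]; exact i1
            · rw [Real.norm_eq_abs, abs_of_nonneg (by positivity)]; exact i2
        _ = 2 / m0 * q n := by rw [div_eq_mul_inv]; ring
    have hmain : HasFDerivAt (fun y => ∑' n, f n y) (∑' n, f' n x) x :=
      hasFDerivAt_tsum_of_isPreconnected hu Metric.isOpen_ball
        (convex_ball x R).isPreconnected
        (fun n y hy => hderiv n y (hRD hy)) (fun n y hy => hbound' n y (hRD hy))
        (Metric.mem_ball_self hR0) hf0 (Metric.mem_ball_self hR0)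
    have hfun : h₀ = fun y => -(1 / (4 * Real.pi * Q)) * ∑' n, f n y := by
      funext y
      rw [hh₀ y]
      simp only [one_div, hf]
    have hd : HasFDerivAt h₀ ((-(1 / (4 * Real.pi * Q))) • ∑' n, f' n x) x := by
      rw [hfun]; exact hmain.const_mul _
    rw [hd.fderiv]
    have hnormsum : Summable (fun n => ‖f' n x‖) :=
      Summable.of_nonneg_of_le (fun n => norm_nonneg _) (fun n => hbound' n x hxD) hu
    have h4πQ : 0 < 4 * Real.pi * Q := by positivity
    calc ‖(-(1 / (4 * Real.pi * Q))) • ∑' n, f' n x‖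
        = (1 / (4 * Real.pi * Q)) * ‖∑' n, f' n x‖ := by
          rw [norm_smul (α := ℝ) (-(1 / (4 * Real.pi * Q))) (∑' n, f' n x),
            Real.norm_eq_abs, abs_neg, abs_of_pos (by positivity)]
      _ ≤ (1 / (4 * Real.pi * Q)) * ∑' n, ‖f' n x‖ :=
          mul_le_mul_of_nonneg_left (norm_tsum_le_tsum_norm hnormsum) (by positivity)
      _ ≤ (1 / (4 * Real.pi * Q)) * ∑' n, 2 * (q n / (c n - ε) ^ 2) :=
          mul_le_mul_of_nonneg_left
            (Summable.tsum_le_tsum (fun n => hbound' n x hxD) hnormsum hu) (by positivity)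
      _ = 1 / (2 * Real.pi * Q) * ∑' n, q n / (c n - ε) ^ 2 := by
          rw [tsum_mul_left, ← mul_assoc]
          congr 1
          field_simp
          ring
  refine ⟨grad, ?_⟩
  intro hδ x hx
  have hεr : ε < r := by
    rw [div_lt_iff₀ hr] at hδ; linarith
  have h2π : (2:ℝ) ≤ Real.pi := by nlinarith [Real.pi_gt_three]
  calc ‖fderiv ℝ h₀ x‖ ≤ 1 / (2 * Real.pi * Q) * ∑' n, q n / (c n - ε) ^ 2 := grad x hx
    _ ≤ 1 / (2 * Real.pi * Q) * (8 / (r * ε)) :=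
        mul_le_mul_of_nonneg_left (hbound hεr) (by positivity)
    _ ≤ 2 / (Q * r * ε) := by
        have he1 : 1 / (2 * Real.pi * Q) * (8 / (r * ε)) = 4 / (Real.pi * Q * r * ε) := by
          field_simp; ring
        rw [he1, div_le_div_iff₀ (by positivity) (by positivity)]
        nlinarith [mul_pos (mul_pos hQpos hr) hε]
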